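/- Let m ∈ ℕ and t := t_{m+1}. Let λ ∈ X be dominant and μ ∈ X be such that μ ≠ t(μ), the untwisted Bruhat edge between μ and t(μ) is directed toward t(μ), and t(μ) ≤ λ. Let r := r_{β,c'} (β ∈ Φ⁺, c' ∈ ℤ) be an affine reflection with r ≠ t and r∘t = t∘r (as maps X → X), such that r(μ) ≠ μ and the edge between r(μ) and μ is directed toward μ in Γ^m. Then r(μ) ◁ μ and r(t(μ)) ◁ t(μ), i.e., the untwisted Bruhat edges between r(μ) and μ and between r(t(μ)) and t(μ) point toward μ and toward t(μ), respectively. -/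

import Mathlib

open scoped BigOperators

namespace TypeATwisted

/-- `ℤ^{n+1}`. -/
abbrev V (n : ℕ) := Fin (n + 1) → ℤ

/-- The vector `(1,…,1)`. -/
def onesV (n : ℕ) : V n := fun _ => 1

/-- The subgroup `ℤ·(1,…,1)`. -/
def lineZ (n : ℕ) : AddSubgroup (V n) := AddSubgroup.zmultiples (onesV n)

/-- The weight lattice `X = ℤ^{n+1}/ℤ·(1,…,1)` of `SL_{n+1}`. -/
abbrev X (n : ℕ) := V n ⧸ lineZ n

/-- The quotient map `ℤ^{n+1} → X`. -/
def toX (n : ℕ) : V n →+ X n := QuotientAddGroup.mk' (lineZ n)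

/-- The positive root `e_a − e_b` (for `a < b`) as a vector in `ℤ^{n+1}`. -/
def posRootV (n : ℕ) (a b : Fin (n + 1)) : V n := Pi.single a 1 - Pi.single b 1

/-- The positive root `e_a − e_b` (for `a < b`) as an element of `X`. -/
def posRootX (n : ℕ) (a b : Fin (n + 1)) : X n := toX n (posRootV n a b)

/-- The pairing `μ ↦ μ_a − μ_b` on `ℤ^{n+1}`. -/
def pairV (n : ℕ) (a b : Fin (n + 1)) : V n →+ ℤ :=
  (Pi.evalAddMonoidHom (fun _ => ℤ) a) - (Pi.evalAddMonoidHom (fun _ => ℤ) b)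

lemma pairV_ker (n : ℕ) (a b : Fin (n + 1)) : ∀ v ∈ lineZ n, pairV n a b v = 0 := by
  intro v hv
  rw [lineZ, AddSubgroup.mem_zmultiples_iff] at hv
  obtain ⟨k, rfl⟩ := hv
  simp [pairV, onesV]

/-- The pairing `⟨μ, β^∨⟩ = μ_a − μ_b` for the positive root `β = e_a − e_b`,
well defined on `X`. -/
def pairX (n : ℕ) (a b : Fin (n + 1)) : X n →+ ℤ :=
  QuotientAddGroup.lift (lineZ n) (pairV n a b) (pairV_ker n a b)

/-- The root lattice `ℤΦ ⊆ X`. -/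
def rootLattice (n : ℕ) : AddSubgroup (X n) :=
  AddSubgroup.closure {x | ∃ a b : Fin (n + 1), a < b ∧ x = posRootX n a b}

/-- `μ ∈ X` is dominant if it has a weakly decreasing representative. -/
def IsDominant (n : ℕ) (μ : X n) : Prop := ∃ v : V n, Antitone v ∧ toX n v = μ

/-- `μ ≤ λ` iff `λ − μ ∈ ℤΦ` and `μ` lies in the convex hull of the `S_{n+1}`-orbit
of `λ` inside `ℝ^{n+1}/ℝ·(1,…,1)`. -/
def wle (n : ℕ) (μ lam : X n) : Prop :=
  lam - μ ∈ rootLattice n ∧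
  ∃ u v : V n, toX n u = μ ∧ toX n v = lam ∧ ∃ c : ℝ,
    (fun i => (u i : ℝ) + c) ∈
      convexHull ℝ {w : Fin (n + 1) → ℝ |
        ∃ σ : Equiv.Perm (Fin (n + 1)), w = fun i => (v (σ i) : ℝ)}

/-- The untwisted Bruhat edge between `μ − kβ` and `μ` points toward `μ`
(`β = e_a − e_b`, `a < b`, `k ≠ 0`): `⟨μ,β^∨⟩ ≥ k > 0` or `⟨μ,β^∨⟩ < k < 0`. -/
def edgeToward (n : ℕ) (a b : Fin (n + 1)) (k : ℤ) (μ : X n) : Prop :=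
  (0 < k ∧ k ≤ pairX n a b μ) ∨ (k < 0 ∧ pairX n a b μ < k)

/-- The edge between `μ − kβ` and `μ` is `m`-twisted: `β = α_{j,n}` (i.e. `b` is the
last index), and with `c := k − ⟨μ,β^∨⟩` one has `c ≥ 1` and `(c−1)·n + j ≤ m`,
where `j = a + 1` (`1`-based). -/
def IsTwisted (n : ℕ) (m : ℕ∞) (a b : Fin (n + 1)) (k : ℤ) (μ : X n) : Prop :=
  b = Fin.last n ∧ 1 ≤ k - pairX n a b μ ∧
  (((k - pairX n a b μ - 1).toNat * n + (a : ℕ) + 1 : ℕ) : ℕ∞) ≤ m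

/-- In the `m`-twisted Bruhat graph `Γ^m`, the edge between `μ − kβ` and `μ` is directed
toward `μ` iff exactly one of `(μ−kβ) ◁ μ` and `m`-twistedness holds.  (`m = 0` gives
the untwisted Bruhat graph.) -/
def dirToward (n : ℕ) (m : ℕ∞) (a b : Fin (n + 1)) (k : ℤ) (μ : X n) : Prop :=
  Xor' (edgeToward n a b k μ) (IsTwisted n m a b k μ)

/-- The edge between `ν` and `μ` is directed toward `μ` in `Γ^m`. -/
def EdgeDirToward (n : ℕ) (m : ℕ∞) (ν μ : X n) : Prop :=
  ∃ a b : Fin (n + 1), a < b ∧ ∃ k : ℤ, k ≠ 0 ∧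
    ν = μ - k • posRootX n a b ∧ dirToward n m a b k μ

/-- `Arr_m(μ,λ)`: the number of pairs `(β,k) ∈ Φ⁺ × (ℤ∖{0})` with `μ − kβ ≤ λ` and the
edge between `μ − kβ` and `μ` directed toward `μ` in `Γ^m`. -/
noncomputable def ArrRes (n : ℕ) (m : ℕ∞) (μ lam : X n) : ℕ :=
  {p : (Fin (n + 1) × Fin (n + 1)) × ℤ | p.1.1 < p.1.2 ∧ p.2 ≠ 0 ∧
    wle n (μ - p.2 • posRootX n p.1.1 p.1.2) lam ∧
    dirToward n m p.1.1 p.1.2 p.2 μ}.ncard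

/-- `Arr_m(μ)`: the number of pairs `(β,k) ∈ Φ⁺ × (ℤ∖{0})` with the edge between
`μ − kβ` and `μ` directed toward `μ` in `Γ^m`. -/
noncomputable def Arr (n : ℕ) (m : ℕ∞) (μ : X n) : ℕ :=
  {p : (Fin (n + 1) × Fin (n + 1)) × ℤ | p.1.1 < p.1.2 ∧ p.2 ≠ 0 ∧
    dirToward n m p.1.1 p.1.2 p.2 μ}.ncard

/-- The affine reflection `r_{β,c}(ν) = ν − (c + ⟨ν,β^∨⟩)·β` for `β = e_a − e_b`. -/
def areflect (n : ℕ) (a b : Fin (n + 1)) (c : ℤ) : X n → X n :=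
  fun ν => ν - (c + pairX n a b ν) • posRootX n a b

/-- `ℓ^β(μ)`: `⟨μ,β^∨⟩` if `⟨μ,β^∨⟩ ≥ 0`, and `−⟨μ,β^∨⟩ − 1` otherwise. -/
def ellBeta (n : ℕ) (a b : Fin (n + 1)) (μ : X n) : ℕ :=
  if 0 ≤ pairX n a b μ then (pairX n a b μ).toNat else (-(pairX n a b μ) - 1).toNat


lemma pairX_toX (n : ℕ) (x y : Fin (n+1)) (v : V n) :
    pairX n x y (toX n v) = v x - v y := rfl

lemma pairX_posRootX (n : ℕ) (x y u w : Fin (n+1)) :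
    pairX n x y (posRootX n u w) =
      ((if x = u then 1 else 0) - (if x = w then 1 else 0))
      - ((if y = u then 1 else 0) - (if y = w then 1 else 0)) := by
  rw [posRootX, pairX_toX]
  simp [posRootV, Pi.single_apply]

lemma sum_smul_posRootV (n : ℕ) (k : ℤ) (x y : Fin (n+1)) :
    ∑ i, (k • posRootV n x y) i = 0 := by
  simp [posRootV, Pi.single_apply, Finset.sum_sub_distrib, mul_sub,
    ← Finset.mul_sum, Finset.sum_ite_eq]

lemma eqV_of_toX_eq {n : ℕ} {u w : V n} (h : toX n u = toX n w)
    (hu : ∑ i, u i = 0) (hw : ∑ i, w i = 0) : u = w := by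
  rw [toX, QuotientAddGroup.mk'_eq_mk'] at h
  obtain ⟨z, hz, hzw⟩ := h
  obtain ⟨j, rfl⟩ := AddSubgroup.mem_zmultiples_iff.mp hz
  have hsum : ∑ i, (u + j • onesV n) i = ∑ i, w i := by rw [hzw]
  simp [Finset.sum_add_distrib, onesV, hu, hw, Finset.sum_const] at hsum
  have hj : j = 0 := by
    rcases hsum with h | h
    · omega
    · exact h
  rw [← hzw, hj, zero_smul, add_zero]

lemma smul_posRoot_lift {n : ℕ} {k k' : ℤ} {x y x' y' : Fin (n+1)}
    (h : k • posRootX n x y = k' • posRootX n x' y') :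
    k • posRootV n x y = k' • posRootV n x' y' := by
  have hX : toX n (k • posRootV n x y) = toX n (k' • posRootV n x' y') := by
    simpa only [posRootX, map_zsmul] using h
  exact eqV_of_toX_eq hX (sum_smul_posRootV _ _ _ _) (sum_smul_posRootV _ _ _ _)

lemma eval_smul_posRootV {n : ℕ} {k k' : ℤ} {x y x' y' : Fin (n+1)}
    (h : k • posRootV n x y = k' • posRootV n x' y') (i : Fin (n+1)) :
    k * ((if i = x then 1 else 0) - (if i = y then 1 else 0))
      = k' * ((if i = x' then 1 else 0) - (if i = y' then 1 else 0)) := by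
  have := congrFun h i
  simpa [posRootV, Pi.single_apply] using this

end TypeATwisted

open TypeATwisted

/-- cf. the commuting case of the wall-crossing lemma: let
`t = t_{m+1} = r_{α_{j,n},c}` with `(c−1)·n + j = m + 1`, let `λ` be dominant, `μ` with
`μ ≠ t(μ)`, the untwisted edge between `μ` and `t(μ)` directed toward `t(μ)`, and
`t(μ) ≤ λ`.  If `r = r_{β,c'}` is an affine reflection with `r ≠ t`, `r∘t = t∘r`,
`r(μ) ≠ μ`, and the edge between `r(μ)` and `μ` directed toward `μ` in `Γ^m`, then the
untwisted edges between `r(μ)` and `μ` and between `r(t(μ))` and `t(μ)` point toward `μ`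
and toward `t(μ)`, respectively. -/
theorem statement6 (n m : ℕ) (hn : 2 ≤ n)
    (a : Fin (n + 1)) (c : ℤ) (ha : (a : ℕ) < n) (hc : 1 ≤ c)
    (hidx : (c - 1) * (n : ℤ) + ((a : ℕ) + 1) = (m : ℤ) + 1)
    (t : X n → X n) (htdef : t = areflect n a (Fin.last n) c)
    (lam μ : X n) (hlam : IsDominant n lam)
    (hne : μ ≠ t μ)
    (hdir : EdgeDirToward n 0 μ (t μ))
    (hle : wle n (t μ) lam)
    (a' b' : Fin (n + 1)) (hab : a' < b') (c' : ℤ)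
    (r : X n → X n) (hrdef : r = areflect n a' b' c')
    (hrt : r ≠ t) (hcomm : r ∘ t = t ∘ r)
    (hrμ : r μ ≠ μ)
    (hredge : EdgeDirToward n (m : ℕ∞) (r μ) μ) :
    EdgeDirToward n 0 (r μ) μ ∧ EdgeDirToward n 0 (r (t μ)) (t μ) := by
  subst htdef hrdef
  have hal : a ≠ Fin.last n := by
    intro h
    rw [h] at ha
    simp [Fin.last] at ha
  have ha'l : a' ≠ Fin.last n := (lt_of_lt_of_le hab (Fin.le_last b')).ne
  have key : ∀ ν : X n,
      ((c + pairX n a (Fin.last n) ν) * pairX n a' b' (posRootX n a (Fin.last n))) • posRootX n a' b'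
      = ((c' + pairX n a' b' ν) * pairX n a (Fin.last n) (posRootX n a' b')) • posRootX n a (Fin.last n) := by
    intro ν
    have h := congrFun hcomm ν
    simp only [Function.comp_apply, areflect, map_sub, map_zsmul, smul_eq_mul] at h
    linear_combination (norm := module) h
  have hPα : pairX n a (Fin.last n) (posRootX n a (Fin.last n)) = 2 := by
    rw [pairX_posRootX]
    simp [hal, Ne.symm hal]
  -- Step B : the indices are disjoint
  have hgood : a' ≠ a ∧ b' ≠ a ∧ b' ≠ Fin.last n := by
    by_cases h1 : a' = a
    · exfalso
      subst h1
      by_cases h2 : b' = Fin.last n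
      · -- same reflection direction: forces r = t, contradiction
        subst h2
        have e1 := key 0
        simp only [map_zero, add_zero, hPα] at e1
        have hev := eval_smul_posRootV (smul_posRoot_lift e1) a'
        simp [hal] at hev
        have hcc : c' = c := by omega
        rw [hcc] at hrt
        exact hrt rfl
      · -- a' = a, b' ≠ last
        have hba : b' ≠ a' := hab.ne'
        have hq : pairX n a' b' (posRootX n a' (Fin.last n)) = 1 := by
          rw [pairX_posRootX]; simp [hal, hba, h2]
        have hp : pairX n a' (Fin.last n) (posRootX n a' b') = 1 := by
          rw [pairX_posRootX]; simp [hab.ne, Ne.symm hal, Ne.symm h2]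
        have e1 := key 0
        simp only [map_zero, add_zero, hq, hp, mul_one] at e1
        have e2 := key (posRootX n a' (Fin.last n))
        simp only [hq, hp, hPα, mul_one] at e2
        have e3 := congrArg₂ (· - ·) e2 e1
        simp only [← sub_smul] at e3
        norm_num at e3
        have e4 : (2 : ℤ) • posRootX n a' b' = (1 : ℤ) • posRootX n a' (Fin.last n) := by
          rw [one_smul]; exact e3
        have hev := eval_smul_posRootV (smul_posRoot_lift e4) a'
        simp [hab.ne, hal] at hev
    · by_cases h3 : b' = a
      · exfalso
        subst h3
        -- a' < b' = a
        have hq : pairX n a' b' (posRootX n b' (Fin.last n)) = -1 := by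
          rw [pairX_posRootX]; simp [h1, ha'l, hal]
        have hp : pairX n b' (Fin.last n) (posRootX n a' b') = -1 := by
          rw [pairX_posRootX]; simp [hab.ne', Ne.symm ha'l, Ne.symm hal]
        have e1 := key 0
        simp only [map_zero, add_zero, hq, hp] at e1
        have e2 := key (posRootX n b' (Fin.last n))
        simp only [hq, hp, hPα] at e2
        have e3 := congrArg₂ (· - ·) e2 e1
        simp only [← sub_smul] at e3
        norm_num at e3
        have e4 : (-2 : ℤ) • posRootX n a' b' = (1 : ℤ) • posRootX n b' (Fin.last n) := by
          rw [one_smul, neg_zsmul]; exact e3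
        have hev := eval_smul_posRootV (smul_posRoot_lift e4) b'
        simp [hab.ne', hal] at hev
      · by_cases h2 : b' = Fin.last n
        · exfalso
          subst h2
          -- b' = last, a' ∉ {a, last}
          have hq : pairX n a' (Fin.last n) (posRootX n a (Fin.last n)) = 1 := by
            rw [pairX_posRootX]; simp [h1, ha'l, Ne.symm hal]
          have hp : pairX n a (Fin.last n) (posRootX n a' (Fin.last n)) = 1 := by
            rw [pairX_posRootX]; simp [hal, Ne.symm h1, Ne.symm ha'l]
          have e1 := key 0
          simp only [map_zero, add_zero, hq, hp, mul_one] at e1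
          have e2 := key (posRootX n a (Fin.last n))
          simp only [hq, hp, hPα, mul_one] at e2
          have e3 := congrArg₂ (· - ·) e2 e1
          simp only [← sub_smul] at e3
          norm_num at e3
          have e4 : (2 : ℤ) • posRootX n a' (Fin.last n) = (1 : ℤ) • posRootX n a (Fin.last n) := by
            rw [one_smul]; exact e3
          have hev := eval_smul_posRootV (smul_posRoot_lift e4) a'
          simp [h1, ha'l] at hev
        · exact ⟨h1, h3, h2⟩
  obtain ⟨ha'a, hb'a, hb'l⟩ := hgood
  have hQα0 : pairX n a' b' (posRootX n a (Fin.last n)) = 0 := by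
    rw [pairX_posRootX]; simp [ha'a, ha'l, hb'a, hb'l]
  -- the reflection r moves μ by K • β
  have hr_mu : areflect n a' b' c' μ = μ - (c' + pairX n a' b' μ) • posRootX n a' b' := rfl
  have hK0 : c' + pairX n a' b' μ ≠ 0 := by
    intro h
    apply hrμ
    rw [hr_mu, h, zero_zsmul, sub_zero]
  obtain ⟨x, y, hxy, k, hk0, hrepr, hdirT⟩ := hredge
  have hKk : (c' + pairX n a' b' μ) • posRootX n a' b' = k • posRootX n x y := by
    rw [hr_mu] at hrepr
    exact sub_right_inj.mp hrepr
  have hV := smul_posRoot_lift hKk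
  have hx : x = a' := by
    by_contra hx
    have h1 := eval_smul_posRootV hV a'
    by_cases hy : a' = y
    · have h2 := eval_smul_posRootV hV b'
      have hbx : b' ≠ x := by
        intro h
        rw [← h, ← hy] at hxy
        exact absurd (hxy.trans hab) (lt_irrefl _)
      have hby : b' ≠ y := hy ▸ hab.ne'
      simp [hab.ne', hbx, hby] at h2
      omega
    · simp [hab.ne, Ne.symm hx, hy] at h1
      omega
  rw [hx] at hV
  have hyb : y = b' := by
    by_contra hy
    have h2 := eval_smul_posRootV hV b'
    simp [hab.ne', Ne.symm hy] at h2
    omega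
  rw [hyb] at hV
  have hkK : k = c' + pairX n a' b' μ := by
    have h1 := eval_smul_posRootV hV a'
    simp [hab.ne] at h1
    omega
  rw [hx, hyb, hkK] at hdirT
  -- the m-twisted edge is in fact untwisted
  have hedge : edgeToward n a' b' (c' + pairX n a' b' μ) μ := by
    rcases hdirT with ⟨he, -⟩ | ⟨ht, -⟩
    · exact he
    · exact absurd ht.1 hb'l
  have hnt0 : ∀ (ξ : X n) (kk : ℤ), ¬ IsTwisted n 0 a' b' kk ξ := by
    rintro ξ kk ⟨-, -, h3⟩
    rw [nonpos_iff_eq_zero] at h3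
    have h4 : ((kk - pairX n a' b' ξ - 1).toNat * n + (a' : ℕ) + 1 : ℕ) = 0 := by
      exact_mod_cast h3
    omega
  have hQt : pairX n a' b' (areflect n a (Fin.last n) c μ) = pairX n a' b' μ := by
    show pairX n a' b' (μ - _ • posRootX n a (Fin.last n)) = _
    rw [map_sub, map_zsmul, hQα0, smul_zero, sub_zero]
  constructor
  · exact ⟨a', b', hab, c' + pairX n a' b' μ, hK0, hr_mu, Or.inl ⟨hedge, hnt0 _ _⟩⟩
  · refine ⟨a', b', hab, c' + pairX n a' b' μ, hK0, ?_, Or.inl ⟨?_, hnt0 _ _⟩⟩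
    · show areflect n a (Fin.last n) c μ
          - (c' + pairX n a' b' (areflect n a (Fin.last n) c μ)) • posRootX n a' b' = _
      rw [hQt]
    · show edgeToward n a' b' (c' + pairX n a' b' μ) (areflect n a (Fin.last n) c μ)
      unfold edgeToward
      rw [hQt]
      exact hedge
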